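/- Let A ∈ ℝ^{n×N} have full row rank, let x ∈ ℝ^N and e ∈ ℝ^n with b = Ax + e, let x^♯ be a best s-term approximation of x, and set ẽ = (AA*)^{-1/2}( A(x − x^♯) + e ). Let γ be a (3s)-th order P-RIP constant for A with γ < 1/2 and set ρ = 2γ. Suppose the sequences {x^k}, {u^k} satisfy: u^k is a best s-term approximation of x^k and x^{k+1} = u^k + A*(AA*)^{-1}(b − A u^k) for all k ≥ 0. Then for every k ≥ 0, ‖u^k − x^♯‖₂ ≤ ρ^k ‖u^0 − x^♯‖₂ + (2/(1−ρ)) ‖ẽ‖₂. -/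

import Mathlib

open Matrix Finset Filter Topology

/-- Euclidean norm of a vector. -/
noncomputable def euclNorm {k : ℕ} (x : Fin k → ℝ) : ℝ := Real.sqrt (∑ i, x i ^ 2)

/-- Square root of a positive semidefinite matrix (as in the older Mathlib). -/
noncomputable def Matrix.PosSemidef.sqrt {n : Type*} [Fintype n] [DecidableEq n]
    {A : Matrix n n ℝ} (hA : A.PosSemidef) : Matrix n n ℝ :=
  hA.1.eigenvectorUnitary.1 * diagonal ((↑) ∘ (Real.sqrt ∘ hA.1.eigenvalues)) *
    (star hA.1.eigenvectorUnitary : Matrix n n ℝ)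

/-- `x` has at most `s` nonzero entries. -/
def IsSparse {k : ℕ} (s : ℕ) (x : Fin k → ℝ) : Prop :=
  (Finset.univ.filter fun i => x i ≠ 0).card ≤ s

/-- Spectral norm (ℓ²-operator norm) of a matrix. -/
noncomputable def specNorm {m k : Type*} [Fintype m] [Fintype k] [DecidableEq k]
    (M : Matrix m k ℝ) : ℝ :=
  ‖LinearMap.toContinuousLinearMap (Matrix.toEuclideanLin M)‖

/-- `cols A T` is the submatrix of `A` consisting of the columns indexed by `T`. -/
def cols {n N : ℕ} (A : Matrix (Fin n) (Fin N) ℝ) (T : Finset (Fin N)) :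
    Matrix (Fin n) {i : Fin N // i ∈ T} ℝ := Matrix.of fun r c => A r c.1

/-- `subv x T` is the subvector of `x` consisting of the entries indexed by `T`. -/
def subv {N : ℕ} (x : Fin N → ℝ) (T : Finset (Fin N)) : {i : Fin N // i ∈ T} → ℝ :=
  fun i => x i.1

/-- The feedback term `(A_T* A_T)⁻¹ A_T* A_{Tᶜ} x_{Tᶜ}`. -/
noncomputable def fb {n N : ℕ} (A : Matrix (Fin n) (Fin N) ℝ) (T : Finset (Fin N))
    (x : Fin N → ℝ) : {i : Fin N // i ∈ T} → ℝ :=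
  ((cols A T)ᵀ * cols A T)⁻¹ *ᵥ ((cols A T)ᵀ *ᵥ (cols A Tᶜ *ᵥ subv x Tᶜ))

private lemma psd_sqrt_mul_self' {m : ℕ} {A : Matrix (Fin m) (Fin m) ℝ} (hA : A.PosSemidef) :
    hA.sqrt * hA.sqrt = A := by
  have hU : (star hA.1.eigenvectorUnitary : Matrix (Fin m) (Fin m) ℝ) *
      (hA.1.eigenvectorUnitary : Matrix (Fin m) (Fin m) ℝ) = 1 := by simp
  have hD : diagonal ((↑) ∘ (Real.sqrt ∘ hA.1.eigenvalues)) *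
      diagonal ((↑) ∘ (Real.sqrt ∘ hA.1.eigenvalues)) =
      diagonal (RCLike.ofReal ∘ hA.1.eigenvalues : Fin m → ℝ) := by
    rw [diagonal_mul_diagonal]; congr 1; funext i
    simp [Real.mul_self_sqrt (hA.eigenvalues_nonneg i)]
  conv_rhs => rw [hA.1.spectral_theorem, Unitary.conjStarAlgAut_apply]
  rw [Matrix.PosSemidef.sqrt, ← hD]
  simp only [Matrix.mul_assoc]
  rw [← Matrix.mul_assoc (star _ : Matrix (Fin m) (Fin m) ℝ) _ _, hU, Matrix.one_mul]

private lemma psd_sqrt_transpose' {m : ℕ} {A : Matrix (Fin m) (Fin m) ℝ} (hA : A.PosSemidef) :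
    (hA.sqrt)ᵀ = hA.sqrt := by
  rw [Matrix.PosSemidef.sqrt]
  simp [Matrix.transpose_mul, star_eq_conjTranspose, conjTranspose_eq_transpose_of_trivial,
    diagonal_transpose, Matrix.mul_assoc]

private lemma enorm_nonneg' {k : ℕ} (v : Fin k → ℝ) : 0 ≤ euclNorm v := Real.sqrt_nonneg _

private lemma dot_self_nonneg' {k : ℕ} (v : Fin k → ℝ) : 0 ≤ v ⬝ᵥ v :=
  Finset.sum_nonneg fun _ _ => mul_self_nonneg _

private lemma enorm_sq' {k : ℕ} (v : Fin k → ℝ) : euclNorm v ^ 2 = v ⬝ᵥ v := by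
  rw [euclNorm, Real.sq_sqrt (Finset.sum_nonneg fun i _ => sq_nonneg _)]
  simp [dotProduct, sq]

private lemma enorm_mono' {m k : ℕ} {v : Fin m → ℝ} {w : Fin k → ℝ}
    (h : v ⬝ᵥ v ≤ w ⬝ᵥ w) : euclNorm v ≤ euclNorm w := by
  rw [euclNorm, euclNorm]
  apply Real.sqrt_le_sqrt
  simpa [dotProduct, sq] using h

private lemma dot_le_enorm' {k : ℕ} (v w : Fin k → ℝ) : v ⬝ᵥ w ≤ euclNorm v * euclNorm w := by
  have h := Finset.sum_mul_sq_le_sq_mul_sq Finset.univ v w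
  calc v ⬝ᵥ w ≤ |v ⬝ᵥ w| := le_abs_self _
    _ = Real.sqrt ((v ⬝ᵥ w) ^ 2) := (Real.sqrt_sq_eq_abs _).symm
    _ ≤ Real.sqrt ((∑ i, v i ^ 2) * ∑ i, w i ^ 2) := Real.sqrt_le_sqrt h
    _ = euclNorm v * euclNorm w := by
        rw [euclNorm, euclNorm, ← Real.sqrt_mul (Finset.sum_nonneg fun i _ => sq_nonneg _)]

private lemma IsSparse.mono' {k s t : ℕ} {x : Fin k → ℝ} (hx : IsSparse s x) (h : s ≤ t) :
    IsSparse t x := le_trans hx h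

private lemma IsSparse.sub' {k s t : ℕ} {a b : Fin k → ℝ} (ha : IsSparse s a)
    (hb : IsSparse t b) : IsSparse (s + t) (a - b) := by
  unfold IsSparse at *
  refine le_trans (le_trans (Finset.card_le_card ?_) (Finset.card_union_le _ _))
    (add_le_add ha hb)
  intro i hi
  simp only [mem_filter, mem_union, mem_univ, true_and] at *
  by_contra hc
  push_neg at hc
  exact hi (by simp [Pi.sub_apply, hc.1, hc.2])

private lemma dot_adj' {m k : ℕ} (M : Matrix (Fin m) (Fin k) ℝ) (a : Fin k → ℝ)
    (b : Fin m → ℝ) : (M *ᵥ a) ⬝ᵥ b = a ⬝ᵥ (Mᵀ *ᵥ b) := by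
  rw [dotProduct_mulVec, vecMul_transpose, dotProduct_comm]

set_option maxHeartbeats 1000000 in
/-- error bound for NST+HT in the noisy / not exactly sparse case. -/
theorem stmt_5 {n N s : ℕ} (hnN : n < N) (A : Matrix (Fin n) (Fin N) ℝ)
    (hpd : (A * Aᵀ).PosDef)
    (x : Fin N → ℝ) (e b : Fin n → ℝ) (hb : b = A *ᵥ x + e)
    (xs : Fin N → ℝ) (hxs : IsSparse s xs)
    (hbest : ∀ z : Fin N → ℝ, IsSparse s z → euclNorm (xs - x) ≤ euclNorm (z - x))
    (et : Fin n → ℝ) (het : et = (hpd.posSemidef.sqrt)⁻¹ *ᵥ (A *ᵥ (x - xs) + e))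
    (γ : ℝ) (hγ0 : 0 ≤ γ) (hγ : γ < 1/2)
    (hPRIP : ∀ z : Fin N → ℝ, IsSparse (3*s) z →
      (1 - γ) * euclNorm z ^ 2 ≤ euclNorm ((hpd.posSemidef.sqrt)⁻¹ *ᵥ (A *ᵥ z)) ^ 2)
    (xk u : ℕ → Fin N → ℝ)
    (hus : ∀ k, IsSparse s (u k))
    (hub : ∀ k, ∀ z : Fin N → ℝ, IsSparse s z → euclNorm (u k - xk k) ≤ euclNorm (z - xk k))
    (hxk : ∀ k, xk (k+1) = u k + Aᵀ *ᵥ ((A * Aᵀ)⁻¹ *ᵥ (b - A *ᵥ u k))) :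
    ∀ k, euclNorm (u k - xs) ≤
      (2 * γ) ^ k * euclNorm (u 0 - xs) + (2 / (1 - 2 * γ)) * euclNorm et := by
  set S := hpd.posSemidef.sqrt with hSdef
  -- basic facts about S
  have hSS : S * S = A * Aᵀ := psd_sqrt_mul_self' hpd.posSemidef
  have hSh : Sᵀ = S := by
    exact psd_sqrt_transpose' hpd.posSemidef
  clear hSdef
  clear_value S
  have hSdetu : IsUnit S.det := by
    have hdet : S.det * S.det = (A * Aᵀ).det := by rw [← Matrix.det_mul, hSS]
    have hpos : (0:ℝ) < (A * Aᵀ).det := hpd.det_pos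
    have : S.det ≠ 0 := by intro h0; rw [h0, mul_zero] at hdet; linarith
    exact this.isUnit
  have hSi1 : S * S⁻¹ = 1 := Matrix.mul_nonsing_inv _ hSdetu
  have hSi2 : S⁻¹ * S = 1 := Matrix.nonsing_inv_mul _ hSdetu
  have hAAinv : (A * Aᵀ)⁻¹ = S⁻¹ * S⁻¹ := by rw [← hSS, Matrix.mul_inv_rev]
  set B := S⁻¹ * A with hBdef
  have hBt : Bᵀ = Aᵀ * S⁻¹ := by
    rw [hBdef, Matrix.transpose_mul, Matrix.transpose_nonsing_inv, hSh]
  set P := Bᵀ * B with hPdef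
  have hBBt : B * Bᵀ = 1 := by
    rw [hBdef, hBt]
    calc S⁻¹ * A * (Aᵀ * S⁻¹) = S⁻¹ * (A * Aᵀ) * S⁻¹ := by simp only [Matrix.mul_assoc]
      _ = S⁻¹ * S * (S * S⁻¹) := by rw [← hSS]; simp only [Matrix.mul_assoc]
      _ = 1 := by rw [hSi1, hSi2, one_mul]
  have hP2 : P * P = P := by
    calc P * P = Bᵀ * (B * Bᵀ) * B := by rw [hPdef]; simp only [Matrix.mul_assoc]
      _ = P := by rw [hBBt, Matrix.mul_one, hPdef]
  have hPt : Pᵀ = P := by rw [hPdef, Matrix.transpose_mul, Matrix.transpose_transpose]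
  set M := (1 : Matrix (Fin N) (Fin N) ℝ) - P with hMdef
  have hMt : Mᵀ = M := by rw [hMdef, Matrix.transpose_sub, Matrix.transpose_one, hPt]
  have hMM : M * M = M := by
    rw [hMdef]
    simp only [Matrix.mul_sub, Matrix.sub_mul, Matrix.one_mul, Matrix.mul_one, hP2]
    abel
  have hKey : Aᵀ * (A * Aᵀ)⁻¹ = Bᵀ * S⁻¹ := by rw [hAAinv, hBt, Matrix.mul_assoc]
  -- Q facts
  have hQnn : ∀ z : Fin N → ℝ, 0 ≤ (M *ᵥ z) ⬝ᵥ z := by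
    intro z
    have h : (M *ᵥ z) ⬝ᵥ (M *ᵥ z) = (M *ᵥ z) ⬝ᵥ z := by
      rw [dot_adj', hMt, Matrix.mulVec_mulVec, hMM, dotProduct_comm]
    rw [← h]
    exact dot_self_nonneg' _
  have hPdot : ∀ z : Fin N → ℝ, (B *ᵥ z) ⬝ᵥ (B *ᵥ z) = z ⬝ᵥ z - (M *ᵥ z) ⬝ᵥ z := by
    intro z
    have h1 : (M *ᵥ z) ⬝ᵥ z = z ⬝ᵥ z - (B *ᵥ z) ⬝ᵥ (B *ᵥ z) := by
      rw [hMdef, Matrix.sub_mulVec, Matrix.one_mulVec, sub_dotProduct]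
      congr 1
      rw [hPdef, ← Matrix.mulVec_mulVec, dot_adj', Matrix.transpose_transpose,
        dotProduct_comm]
    rw [h1]; ring
  have hQle : ∀ z : Fin N → ℝ, IsSparse (3*s) z →
      (M *ᵥ z) ⬝ᵥ z ≤ γ * (z ⬝ᵥ z) := by
    intro z hz
    have h := hPRIP z hz
    rw [enorm_sq', Matrix.mulVec_mulVec, ← hBdef, enorm_sq', hPdot] at h
    linarith
  have hBcon : ∀ z : Fin N → ℝ, euclNorm (B *ᵥ z) ≤ euclNorm z := by
    intro z
    apply enorm_mono'
    rw [hPdot]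
    linarith [hQnn z]
  -- Cauchy-Schwarz for the PSD form Q
  have hQCS : ∀ v w : Fin N → ℝ, IsSparse (3*s) v → IsSparse (3*s) w →
      (M *ᵥ v) ⬝ᵥ w ≤ γ * euclNorm v * euclNorm w := by
    intro v w hv hw
    have hsym : ∀ a c : Fin N → ℝ, (M *ᵥ a) ⬝ᵥ c = (M *ᵥ c) ⬝ᵥ a := by
      intro a c
      rw [dot_adj', hMt, dotProduct_comm]
    have hquad : ∀ t : ℝ, 0 ≤ ((M *ᵥ w) ⬝ᵥ w) * (t * t) +
        (2 * ((M *ᵥ v) ⬝ᵥ w)) * t + (M *ᵥ v) ⬝ᵥ v := by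
      intro t
      have hexp : (M *ᵥ (t • w + v)) ⬝ᵥ (t • w + v) =
          ((M *ᵥ w) ⬝ᵥ w) * (t * t) + (2 * ((M *ᵥ v) ⬝ᵥ w)) * t + (M *ᵥ v) ⬝ᵥ v := by
        rw [Matrix.mulVec_add, Matrix.mulVec_smul, add_dotProduct,
          smul_dotProduct, dotProduct_add, dotProduct_add,
          dotProduct_smul, dotProduct_smul, hsym w v]
        simp only [smul_eq_mul]
        ring
      rw [← hexp]
      exact hQnn _
    have hdisc := discrim_le_zero hquad
    rw [discrim] at hdisc
    have hsq : ((M *ᵥ v) ⬝ᵥ w) ^ 2 ≤ ((M *ᵥ v) ⬝ᵥ v) * ((M *ᵥ w) ⬝ᵥ w) := by nlinarith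
    have h1 : (M *ᵥ v) ⬝ᵥ v ≤ γ * euclNorm v ^ 2 := by rw [enorm_sq']; exact hQle v hv
    have h2 : (M *ᵥ w) ⬝ᵥ w ≤ γ * euclNorm w ^ 2 := by rw [enorm_sq']; exact hQle w hw
    have hsq2 : ((M *ᵥ v) ⬝ᵥ w) ^ 2 ≤ (γ * euclNorm v * euclNorm w) ^ 2 := by
      calc ((M *ᵥ v) ⬝ᵥ w) ^ 2 ≤ ((M *ᵥ v) ⬝ᵥ v) * ((M *ᵥ w) ⬝ᵥ w) := hsq
        _ ≤ (γ * euclNorm v ^ 2) * (γ * euclNorm w ^ 2) := by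
            apply mul_le_mul h1 h2 (hQnn w)
            positivity
        _ = (γ * euclNorm v * euclNorm w) ^ 2 := by ring
    nlinarith [mul_nonneg (mul_nonneg hγ0 (enorm_nonneg' v)) (enorm_nonneg' w)]
  -- key identity for the iterates
  have hyid : ∀ k, xk (k+1) - xs = M *ᵥ (u k - xs) + Bᵀ *ᵥ et := by
    intro k
    rw [hxk k, hb, het, hMdef]
    simp only [Matrix.mulVec_add, Matrix.mulVec_sub, Matrix.mulVec_mulVec,
      Matrix.sub_mulVec, Matrix.one_mulVec, ← Matrix.mul_assoc, hKey]
    have hPA : Bᵀ * S⁻¹ * A = P := by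
      rw [hPdef, hBdef, Matrix.mul_assoc]
    rw [hPA]
    abel
  -- one-step estimate
  have hstep : ∀ k, euclNorm (u (k+1) - xs) ≤
      2 * γ * euclNorm (u k - xs) + 2 * euclNorm et := by
    intro k
    set v := u k - xs with hv
    set w := u (k+1) - xs with hw
    set y := xk (k+1) - xs with hy
    have hvs : IsSparse (3*s) v := (IsSparse.sub' (hus k) hxs).mono' (by omega)
    have hws : IsSparse (3*s) w := (IsSparse.sub' (hus (k+1)) hxs).mono' (by omega)
    have h1 : euclNorm (u (k+1) - xk (k+1)) ≤ euclNorm (xs - xk (k+1)) := hub (k+1) xs hxs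
    have h1' : (u (k+1) - xk (k+1)) ⬝ᵥ (u (k+1) - xk (k+1)) ≤
        (xs - xk (k+1)) ⬝ᵥ (xs - xk (k+1)) := by
      rw [← enorm_sq', ← enorm_sq']
      exact pow_le_pow_left₀ (enorm_nonneg' _) h1 2
    have he1 : u (k+1) - xk (k+1) = w - y := by rw [hw, hy]; abel
    have he2 : xs - xk (k+1) = -y := by rw [hy]; abel
    rw [he1, he2] at h1'
    have hexp : (w - y) ⬝ᵥ (w - y) = w ⬝ᵥ w - 2 * (y ⬝ᵥ w) + y ⬝ᵥ y := by
      simp only [sub_dotProduct, dotProduct_sub]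
      rw [dotProduct_comm w y]
      ring
    have hneg : (-y) ⬝ᵥ (-y) = y ⬝ᵥ y := by
      simp [neg_dotProduct, dotProduct_neg]
    rw [hexp, hneg] at h1'
    have hww : w ⬝ᵥ w ≤ 2 * (y ⬝ᵥ w) := by linarith
    -- bound y ⬝ᵥ w
    have hyw : y ⬝ᵥ w ≤ γ * euclNorm v * euclNorm w + euclNorm et * euclNorm w := by
      rw [hy, hyid k, ← hv, add_dotProduct]
      gcongr
      · exact hQCS v w hvs hws
      · calc (Bᵀ *ᵥ et) ⬝ᵥ w = et ⬝ᵥ (B *ᵥ w) := by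
              rw [dot_adj', Matrix.transpose_transpose]
          _ ≤ euclNorm et * euclNorm (B *ᵥ w) := dot_le_enorm' _ _
          _ ≤ euclNorm et * euclNorm w := by
              have := hBcon w
              have := enorm_nonneg' et
              nlinarith
    have hfin : euclNorm w ^ 2 ≤ (2 * γ * euclNorm v + 2 * euclNorm et) * euclNorm w := by
      rw [enorm_sq']
      nlinarith
    rcases eq_or_lt_of_le (enorm_nonneg' w) with h0 | h0
    · rw [← h0]
      have := enorm_nonneg' v
      have := enorm_nonneg' et
      positivity
    · have hm : euclNorm w * euclNorm w ≤ (2 * γ * euclNorm v + 2 * euclNorm et) * euclNorm w := by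
        nlinarith [hfin]
      exact le_of_mul_le_mul_right hm h0
  -- induction
  intro k
  induction k with
  | zero =>
    simp only [pow_zero, one_mul]
    have h1 : 0 < 1 - 2 * γ := by linarith
    have : 0 ≤ (2 / (1 - 2 * γ)) * euclNorm et := by
      apply mul_nonneg (by positivity) (enorm_nonneg' _)
    linarith
  | succ k IH =>
    have hs := hstep k
    have h2γ : (0:ℝ) ≤ 2 * γ := by linarith
    have IH2 : 2 * γ * euclNorm (u k - xs) ≤
        2 * γ * ((2 * γ) ^ k * euclNorm (u 0 - xs) + (2 / (1 - 2 * γ)) * euclNorm et) :=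
      mul_le_mul_of_nonneg_left IH h2γ
    have hC : 2 * γ * ((2 / (1 - 2 * γ)) * euclNorm et) + 2 * euclNorm et =
        (2 / (1 - 2 * γ)) * euclNorm et := by
      have h1 : (1 - 2 * γ) ≠ 0 := by intro h; linarith
      field_simp
      ring
    have hexp : 2 * γ * ((2 * γ) ^ k * euclNorm (u 0 - xs) + (2 / (1 - 2 * γ)) * euclNorm et) =
        (2 * γ) ^ (k+1) * euclNorm (u 0 - xs) + 2 * γ * ((2 / (1 - 2 * γ)) * euclNorm et) := by
      ring
    linarith [hs, IH2, hexp, hC]
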